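/- Let X = [−2,2], Y = [−1,1], f(x,y) = −y, and g(x,y) = (y − x)². Define S(x) := argmin_{y∈[−1,1]} (y − x)², ψ(x) := min_{y∈S(x)} (−y), and, for σ > 0, ψ_σ(x) := σ^{-1}( min_{y∈[−1,1]} (−σy + (y − x)²) − min_{z∈[−1,1]} (z − x)² ). Then: (i) ψ(x) = 1 for x ∈ [−2,−1], ψ(x) = −x for x ∈ [−1,1], and ψ(x) = −1 for x ∈ [1,2]; consequently ψ is not differentiable at x = −1 nor at x = 1; (ii) for every σ ∈ (0,1], ψ_σ is differentiable at x = 1 and at x = −1, with ψ_σ′(1) = 0 and ψ_σ′(−1) = −1. -/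

import Mathlib

open Set Metric Filter
open Topology

/-- Lower-level solution set `S(x) = argmin_{y ∈ [−1,1]} (y − x)²`. -/
noncomputable def S19 (x : ℝ) : Set ℝ :=
  {y ∈ Icc (-1:ℝ) 1 | ∀ z ∈ Icc (-1:ℝ) 1, (y - x) ^ 2 ≤ (z - x) ^ 2}

/-- Hyper-objective `ψ(x) = min_{y ∈ S(x)} (−y)` for `f(x,y) = −y`. -/
noncomputable def psi19 (x : ℝ) : ℝ :=
  sInf ((fun y => -y) '' S19 x)

/-- Penalized hyper-objective
`ψ_σ(x) = σ⁻¹ (min_{y∈[−1,1]} (−σ y + (y−x)²) − min_{z∈[−1,1]} (z−x)²)`. -/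
noncomputable def psiSig19 (σ x : ℝ) : ℝ :=
  σ⁻¹ * (sInf ((fun y => -(σ * y) + (y - x) ^ 2) '' Icc (-1:ℝ) 1)
    - sInf ((fun z => (z - x) ^ 2) '' Icc (-1:ℝ) 1))


lemma inf_img {f : ℝ → ℝ} {m : ℝ} (hm : m ∈ Icc (-1:ℝ) 1)
    (h : ∀ z ∈ Icc (-1:ℝ) 1, f m ≤ f z) : sInf (f '' Icc (-1:ℝ) 1) = f m := by
  apply IsLeast.csInf_eq
  exact ⟨⟨m, hm, rfl⟩, by rintro b ⟨z, hz, rfl⟩; exact h z hz⟩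

lemma g2_left {x : ℝ} (hx : x ≤ -1) :
    sInf ((fun z => (z - x) ^ 2) '' Icc (-1:ℝ) 1) = (x + 1) ^ 2 := by
  rw [inf_img (f := fun z => (z - x)^2) (m := -1) (by norm_num)]
  · ring
  · intro z hz; simp only [mem_Icc] at hz; nlinarith [hz.1, hz.2]

lemma g2_mid {x : ℝ} (h1 : -1 ≤ x) (h2 : x ≤ 1) :
    sInf ((fun z => (z - x) ^ 2) '' Icc (-1:ℝ) 1) = 0 := by
  rw [inf_img (f := fun z => (z - x)^2) (m := x) ⟨h1, h2⟩]
  · ring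
  · intro z hz; nlinarith [sq_nonneg (z - x)]

lemma g2_right {x : ℝ} (hx : 1 ≤ x) :
    sInf ((fun z => (z - x) ^ 2) '' Icc (-1:ℝ) 1) = (x - 1) ^ 2 := by
  rw [inf_img (f := fun z => (z - x)^2) (m := 1) (by norm_num)]
  · ring
  · intro z hz; simp only [mem_Icc] at hz; nlinarith [hz.1, hz.2]

lemma g1_right {σ x : ℝ} (hx : 1 ≤ x + σ/2) :
    sInf ((fun y => -(σ * y) + (y - x) ^ 2) '' Icc (-1:ℝ) 1) = -σ + (1 - x) ^ 2 := by
  rw [inf_img (f := fun y => -(σ * y) + (y - x)^2) (m := 1) (by norm_num)]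
  · ring
  · intro z hz; simp only [mem_Icc] at hz; nlinarith [hz.1, hz.2]

lemma g1_mid {σ x : ℝ} (h1 : -1 ≤ x + σ/2) (h2 : x + σ/2 ≤ 1) :
    sInf ((fun y => -(σ * y) + (y - x) ^ 2) '' Icc (-1:ℝ) 1) = -(σ * x) - σ^2/4 := by
  rw [inf_img (f := fun y => -(σ * y) + (y - x)^2) (m := x + σ/2) ⟨h1, h2⟩]
  · ring
  · intro z hz; nlinarith [sq_nonneg (z - x - σ/2)]

lemma S19_left {x : ℝ} (hx : x ≤ -1) : S19 x = {-1} := by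
  ext y
  simp only [S19, mem_setOf_eq, mem_singleton_iff, mem_Icc]
  constructor
  · rintro ⟨⟨h1, h2⟩, h⟩
    have := h (-1) (by norm_num)
    nlinarith [sq_nonneg (y + 1)]
  · rintro rfl
    refine ⟨by norm_num, ?_⟩
    intro z hz; nlinarith [hz.1, hz.2]

lemma S19_mid {x : ℝ} (h1 : -1 ≤ x) (h2 : x ≤ 1) : S19 x = {x} := by
  ext y
  simp only [S19, mem_setOf_eq, mem_singleton_iff, mem_Icc]
  constructor
  · rintro ⟨⟨hy1, hy2⟩, h⟩
    have := h x ⟨h1, h2⟩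
    nlinarith [sq_nonneg (y - x)]
  · intro hyx; subst hyx
    exact ⟨⟨h1, h2⟩, fun z hz => by nlinarith [sq_nonneg (z - y)]⟩

lemma S19_right {x : ℝ} (hx : 1 ≤ x) : S19 x = {1} := by
  ext y
  simp only [S19, mem_setOf_eq, mem_singleton_iff, mem_Icc]
  constructor
  · rintro ⟨⟨h1, h2⟩, h⟩
    have := h 1 (by norm_num)
    nlinarith [sq_nonneg (y - 1)]
  · rintro rfl
    refine ⟨by norm_num, ?_⟩
    intro z hz; nlinarith [hz.1, hz.2]

lemma psi_left {x : ℝ} (hx : x ≤ -1) : psi19 x = 1 := by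
  simp [psi19, S19_left hx]

lemma psi_mid {x : ℝ} (h1 : -1 ≤ x) (h2 : x ≤ 1) : psi19 x = -x := by
  simp [psi19, S19_mid h1 h2]

lemma psi_right {x : ℝ} (hx : 1 ≤ x) : psi19 x = -1 := by
  simp [psi19, S19_right hx]

lemma maxsq_deriv (a : ℝ) : HasDerivAt (fun x : ℝ => (max (a - x) 0) ^ 2) 0 a := by
  rw [hasDerivAt_iff_isLittleO]
  rw [Asymptotics.isLittleO_iff]
  intro c hc
  filter_upwards [Metric.ball_mem_nhds a hc] with y hy
  rw [mem_ball, Real.dist_eq] at hy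
  have h2 : (max (a - y) 0) ^ 2 ≤ (y - a) ^ 2 := by
    rcases le_total (a - y) 0 with h | h
    · rw [max_eq_right h]; nlinarith [sq_nonneg (y - a)]
    · rw [max_eq_left h]; nlinarith
  have h3 : max (a - a) (0:ℝ) = 0 := by simp
  have h4 : (y - a) ^ 2 ≤ c * |y - a| := by
    rw [← sq_abs]; nlinarith [abs_nonneg (y - a)]
  simp only [h3, smul_eq_mul, mul_zero, sub_zero, Real.norm_eq_abs]
  rw [abs_of_nonneg (by nlinarith [sq_nonneg (max (a - y) 0)] : (0:ℝ) ≤ (max (a - y) 0) ^ 2 - 0 ^ 2)]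
  calc (max (a - y) 0) ^ 2 - 0 ^ 2 ≤ (y - a) ^ 2 := by nlinarith
  _ ≤ c * |y - a| := h4

theorem stmt19 :
    (∀ x ∈ Icc (-2:ℝ) (-1), psi19 x = 1) ∧
    (∀ x ∈ Icc (-1:ℝ) 1, psi19 x = -x) ∧
    (∀ x ∈ Icc (1:ℝ) 2, psi19 x = -1) ∧
    ¬ DifferentiableWithinAt ℝ psi19 (Icc (-2:ℝ) 2) (-1) ∧
    ¬ DifferentiableWithinAt ℝ psi19 (Icc (-2:ℝ) 2) 1 ∧
    (∀ σ ∈ Ioc (0:ℝ) 1,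
      HasDerivAt (psiSig19 σ) 0 1 ∧ HasDerivAt (psiSig19 σ) (-1) (-1)) := by
  have pL : ∀ x ∈ Icc (-2:ℝ) (-1), psi19 x = 1 := fun x hx => psi_left hx.2
  have pM : ∀ x ∈ Icc (-1:ℝ) 1, psi19 x = -x := fun x hx => psi_mid hx.1 hx.2
  have pR : ∀ x ∈ Icc (1:ℝ) 2, psi19 x = -1 := fun x hx => psi_right hx.1
  refine ⟨pL, pM, pR, ?_, ?_, ?_⟩
  · intro hd
    have hD := hd.hasDerivWithinAt
    set d := derivWithin psi19 (Icc (-2:ℝ) 2) (-1) with hdd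
    have hA : HasDerivWithinAt psi19 d (Icc (-2:ℝ) (-1)) (-1) :=
      hD.mono (Icc_subset_Icc le_rfl (by norm_num))
    have hA' : HasDerivWithinAt (fun _ : ℝ => (1:ℝ)) d (Icc (-2:ℝ) (-1)) (-1) :=
      hA.congr (fun y hy => (pL y hy).symm) (pL _ ⟨by norm_num, le_rfl⟩).symm
    have u1 : UniqueDiffWithinAt ℝ (Icc (-2:ℝ) (-1)) (-1) :=
      (uniqueDiffOn_Icc (by norm_num : (-2:ℝ) < -1)) _ ⟨by norm_num, le_rfl⟩
    have e1 : d = 0 := by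
      have h1 := hA'.derivWithin u1
      have h2 := (hasDerivWithinAt_const (-1:ℝ) (Icc (-2:ℝ) (-1)) (1:ℝ)).derivWithin u1
      rw [h1] at h2; exact h2
    have hB : HasDerivWithinAt psi19 d (Icc (-1:ℝ) 1) (-1) :=
      hD.mono (Icc_subset_Icc (by norm_num) (by norm_num))
    have hB' : HasDerivWithinAt (fun y : ℝ => -y) d (Icc (-1:ℝ) 1) (-1) :=
      hB.congr (fun y hy => (pM y hy).symm) (pM _ ⟨le_rfl, by norm_num⟩).symm
    have u2 : UniqueDiffWithinAt ℝ (Icc (-1:ℝ) 1) (-1) :=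
      (uniqueDiffOn_Icc (by norm_num : (-1:ℝ) < 1)) _ ⟨le_rfl, by norm_num⟩
    have e2 : d = -1 := by
      have h1 := hB'.derivWithin u2
      have h2 := ((hasDerivAt_neg (-1:ℝ)).hasDerivWithinAt (s := Icc (-1:ℝ) 1)).derivWithin u2
      rw [h1] at h2; exact h2
    rw [e1] at e2; norm_num at e2
  · intro hd
    have hD := hd.hasDerivWithinAt
    set d := derivWithin psi19 (Icc (-2:ℝ) 2) 1 with hdd
    have hA : HasDerivWithinAt psi19 d (Icc (1:ℝ) 2) 1 :=
      hD.mono (Icc_subset_Icc (by norm_num) le_rfl)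
    have hA' : HasDerivWithinAt (fun _ : ℝ => (-1:ℝ)) d (Icc (1:ℝ) 2) 1 :=
      hA.congr (fun y hy => (pR y hy).symm) (pR _ ⟨le_rfl, by norm_num⟩).symm
    have u1 : UniqueDiffWithinAt ℝ (Icc (1:ℝ) 2) 1 :=
      (uniqueDiffOn_Icc (by norm_num : (1:ℝ) < 2)) _ ⟨le_rfl, by norm_num⟩
    have e1 : d = 0 := by
      have h1 := hA'.derivWithin u1
      have h2 := (hasDerivWithinAt_const (1:ℝ) (Icc (1:ℝ) 2) (-1:ℝ)).derivWithin u1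
      rw [h1] at h2; exact h2
    have hB : HasDerivWithinAt psi19 d (Icc (-1:ℝ) 1) 1 :=
      hD.mono (Icc_subset_Icc (by norm_num) (by norm_num))
    have hB' : HasDerivWithinAt (fun y : ℝ => -y) d (Icc (-1:ℝ) 1) 1 :=
      hB.congr (fun y hy => (pM y hy).symm) (pM _ ⟨by norm_num, le_rfl⟩).symm
    have u2 : UniqueDiffWithinAt ℝ (Icc (-1:ℝ) 1) 1 :=
      (uniqueDiffOn_Icc (by norm_num : (-1:ℝ) < 1)) _ ⟨by norm_num, le_rfl⟩
    have e2 : d = -1 := by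
      have h1 := hB'.derivWithin u2
      have h2 := ((hasDerivAt_neg (1:ℝ)).hasDerivWithinAt (s := Icc (-1:ℝ) 1)).derivWithin u2
      rw [h1] at h2; exact h2
    rw [e1] at e2; norm_num at e2
  · rintro σ ⟨hσ0, hσ1⟩
    have hσne : σ ≠ 0 := ne_of_gt hσ0
    constructor
    · have hmem : Ioo (1 - σ/2) (3:ℝ) ∈ 𝓝 (1:ℝ) := Ioo_mem_nhds (by linarith) (by norm_num)
      have heq : psiSig19 σ =ᶠ[𝓝 1] fun x => -1 + σ⁻¹ * (max (1 - x) 0)^2 := by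
        filter_upwards [hmem] with x hx
        obtain ⟨hx1, hx2⟩ := hx
        unfold psiSig19
        rw [g1_right (by linarith)]
        rcases le_total x 1 with h | h
        · rw [g2_mid (by linarith) h, max_eq_left (by linarith)]
          field_simp; try ring
        · rw [g2_right h, max_eq_right (by linarith)]
          field_simp; try ring
      have hF : HasDerivAt (fun x => -1 + σ⁻¹ * (max (1 - x) 0)^2) 0 (1:ℝ) := by
        have := ((maxsq_deriv 1).const_mul σ⁻¹).const_add (-1:ℝ)
        simpa using this
      exact hF.congr_of_eventuallyEq heq
    · have hmem : Ioo (-1 - σ/2) (1 - σ/2) ∈ 𝓝 (-1:ℝ) :=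
        Ioo_mem_nhds (by linarith) (by linarith)
      have heq : psiSig19 σ =ᶠ[𝓝 (-1)] fun x => -x - σ/4 - σ⁻¹ * (max (-1 - x) 0)^2 := by
        filter_upwards [hmem] with x hx
        obtain ⟨hx1, hx2⟩ := hx
        unfold psiSig19
        rw [g1_mid (by linarith) (by linarith)]
        rcases le_total x (-1) with h | h
        · rw [g2_left h, max_eq_left (by linarith)]
          field_simp; try ring
        · rw [g2_mid h (by linarith), max_eq_right (by linarith)]
          field_simp; try ring
      have hF : HasDerivAt (fun x => -x - σ/4 - σ⁻¹ * (max (-1 - x) 0)^2) (-1) (-1:ℝ) := by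
        have h1 : HasDerivAt (fun x : ℝ => -x - σ/4) (-1) (-1:ℝ) := by
          simpa using (hasDerivAt_id (-1:ℝ)).neg.sub_const (σ/4)
        have h2 := (maxsq_deriv (-1)).const_mul σ⁻¹
        have := h1.sub h2
        simpa [Pi.sub_def] using this
      exact hF.congr_of_eventuallyEq heq
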